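/- Let X be a real normed space of dimension ≥ n satisfying property (G). The space of multilinear n-functionals on X bounded with respect to the Gähler n-norm, equipped with ‖f‖_{n,n} = sup |f(x₁,...,xₙ)|/‖x₁,...,xₙ‖_G, is a Banach space. -/

import Mathlib

open scoped BigOperators

/-- The Gähler `n`-norm on a real normed space. -/
noncomputable def gahler {X : Type*} [NormedAddCommGroup X] [NormedSpace ℝ X] {n : ℕ}
    (x : Fin n → X) : ℝ :=
  sSup {r | ∃ f : Fin n → (X →L[ℝ] ℝ), (∀ i, ‖f i‖ ≤ 1) ∧
    r = |Matrix.det (Matrix.of fun i j => f j (x i))|}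

/-- The Miličić functional. -/
noncomputable def milicic {X : Type*} [NormedAddCommGroup X] [NormedSpace ℝ X]
    (τp τm : X → X → ℝ) (x y : X) : ℝ :=
  ‖x‖ / 2 * (τm x y + τp x y)

/-- `‖f‖_{n,n}`: the smallest constant `K ≥ 0` with `|f(x₁,…,xₙ)| ≤ K ‖x₁,…,xₙ‖_G`. -/
noncomputable def normnn {X : Type*} [NormedAddCommGroup X] [NormedSpace ℝ X] {n : ℕ}
    (f : MultilinearMap ℝ (fun _ : Fin n => X) ℝ) : ℝ :=
  sInf {K | 0 ≤ K ∧ ∀ x : Fin n → X, |f x| ≤ K * gahler x}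

lemma gahler_nonneg {X : Type*} [NormedAddCommGroup X] [NormedSpace ℝ X] {n : ℕ}
    (x : Fin n → X) : 0 ≤ gahler x := by
  apply Real.sSup_nonneg
  rintro r ⟨f, -, rfl⟩
  exact abs_nonneg _

lemma normnn_nonneg {X : Type*} [NormedAddCommGroup X] [NormedSpace ℝ X] {n : ℕ}
    (g : MultilinearMap ℝ (fun _ : Fin n => X) ℝ) : 0 ≤ normnn g :=
  Real.sInf_nonneg (fun _ h => h.1)

lemma normnn_le {X : Type*} [NormedAddCommGroup X] [NormedSpace ℝ X] {n : ℕ}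
    {g : MultilinearMap ℝ (fun _ : Fin n => X) ℝ} {K : ℝ} (hK0 : 0 ≤ K)
    (hK : ∀ x : Fin n → X, |g x| ≤ K * gahler x) : normnn g ≤ K :=
  csInf_le ⟨0, fun _ h => h.1⟩ ⟨hK0, hK⟩

lemma abs_le_normnn_mul {X : Type*} [NormedAddCommGroup X] [NormedSpace ℝ X] {n : ℕ}
    {g : MultilinearMap ℝ (fun _ : Fin n => X) ℝ}
    (hne : ∃ K, 0 ≤ K ∧ ∀ x : Fin n → X, |g x| ≤ K * gahler x) (x : Fin n → X) :
    |g x| ≤ normnn g * gahler x := by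
  rcases eq_or_lt_of_le (gahler_nonneg x) with h | h
  · obtain ⟨K, hK0, hK⟩ := hne
    have := hK x
    rw [← h] at this ⊢
    simpa using this
  · have h1 : |g x| / gahler x ≤ normnn g := by
      apply le_csInf hne
      rintro K ⟨hK0, hK⟩
      exact (div_le_iff₀ h).mpr (hK x)
    calc |g x| = |g x| / gahler x * gahler x := by field_simp
    _ ≤ normnn g * gahler x := mul_le_mul_of_nonneg_right h1 h.le

open Filter

/-- The `n`-dual space of `(X, ‖·,…,·‖_G)` is a Banach space: every sequence of multilinear
`n`-functionals bounded in the Gähler `n`-norm which is Cauchy for `‖·‖_{n,n}` converges in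
`‖·‖_{n,n}` to a bounded multilinear `n`-functional. -/
theorem stmt16 {X : Type*} [NormedAddCommGroup X] [NormedSpace ℝ X] (n : ℕ)
    (hdim : (n : Cardinal) ≤ Module.rank ℝ X)
    (τp τm : X → X → ℝ)
    (hτp : ∀ x y : X, Filter.Tendsto (fun t : ℝ => (‖x + t • y‖ - ‖x‖) / t)
      (nhdsWithin 0 (Set.Ioi 0)) (nhds (τp x y)))
    (hτm : ∀ x y : X, Filter.Tendsto (fun t : ℝ => (‖x + t • y‖ - ‖x‖) / t)
      (nhdsWithin 0 (Set.Iio 0)) (nhds (τm x y)))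
    (hG : ∀ x : X, IsLinearMap ℝ (fun y => milicic τp τm x y))
    (f : ℕ → MultilinearMap ℝ (fun _ : Fin n => X) ℝ)
    (hbdd : ∀ m, ∃ K > 0, ∀ x : Fin n → X, |(f m) x| ≤ K * gahler x)
    (hcauchy : ∀ ε > (0 : ℝ), ∃ N, ∀ k l, N ≤ k → N ≤ l → normnn (f k - f l) < ε) :
    ∃ F : MultilinearMap ℝ (fun _ : Fin n => X) ℝ,
      (∃ K > 0, ∀ x : Fin n → X, |F x| ≤ K * gahler x) ∧
      Filter.Tendsto (fun m => normnn (f m - F)) Filter.atTop (nhds 0) := by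
  have hbdd' : ∀ k l, ∃ K, 0 ≤ K ∧ ∀ x : Fin n → X, |(f k - f l) x| ≤ K * gahler x := by
    intro k l
    obtain ⟨K1, hK1, h1⟩ := hbdd k
    obtain ⟨K2, hK2, h2⟩ := hbdd l
    refine ⟨K1 + K2, by positivity, fun x => ?_⟩
    simp only [MultilinearMap.sub_apply]
    calc |f k x - f l x| ≤ |f k x| + |f l x| := abs_sub _ _
    _ ≤ K1 * gahler x + K2 * gahler x := add_le_add (h1 x) (h2 x)
    _ = (K1 + K2) * gahler x := by ring
  have key : ∀ k l (x : Fin n → X), |f k x - f l x| ≤ normnn (f k - f l) * gahler x := by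
    intro k l x
    have := abs_le_normnn_mul (hbdd' k l) x
    simpa using this
  -- pointwise limits exist
  have hC : ∀ x : Fin n → X, ∃ L, Tendsto (fun m => f m x) atTop (nhds L) := by
    intro x
    apply cauchySeq_tendsto_of_complete
    rw [Metric.cauchySeq_iff]
    intro ε hε
    have hgx := gahler_nonneg x
    have hpos : 0 < gahler x + 1 := by linarith
    obtain ⟨N, hN⟩ := hcauchy (ε / (gahler x + 1)) (div_pos hε hpos)
    refine ⟨N, fun k hk l hl => ?_⟩
    rw [Real.dist_eq]
    calc |f k x - f l x| ≤ normnn (f k - f l) * gahler x := key k l x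
    _ ≤ (ε / (gahler x + 1)) * gahler x :=
        mul_le_mul_of_nonneg_right (hN k l hk hl).le hgx
    _ < (ε / (gahler x + 1)) * (gahler x + 1) := by
        apply mul_lt_mul_of_pos_left (by linarith) (div_pos hε hpos)
    _ = ε := by field_simp
  choose g hg using hC
  let F : MultilinearMap ℝ (fun _ : Fin n => X) ℝ :=
    { toFun := g
      map_update_add' := by
        intro _ x i a b
        refine tendsto_nhds_unique (hg _) ?_
        have heq : (fun m => f m (Function.update x i (a + b)))
            = fun m => f m (Function.update x i a) + f m (Function.update x i b) := by
          funext m; exact (f m).map_update_add x i a b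
        rw [heq]
        exact (hg _).add (hg _)
      map_update_smul' := by
        intro _ x i c a
        refine tendsto_nhds_unique (hg _) ?_
        have heq : (fun m => f m (Function.update x i (c • a)))
            = fun m => c • f m (Function.update x i a) := by
          funext m; exact (f m).map_update_smul x i c a
        rw [heq]
        exact (hg _).const_smul c }
  have hFx : ∀ x : Fin n → X, Tendsto (fun m => f m x) atTop (nhds (F x)) := hg
  -- key estimate: for m ≥ N(ε), pointwise |f m x - F x| ≤ ε * gahler x
  have hest : ∀ ε > (0:ℝ), ∃ N, ∀ m, N ≤ m →
      ∀ x : Fin n → X, |f m x - F x| ≤ ε * gahler x := by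
    intro ε hε
    obtain ⟨N, hN⟩ := hcauchy ε hε
    refine ⟨N, fun m hm x => ?_⟩
    have htend : Tendsto (fun l => |f m x - f l x|) atTop (nhds (|f m x - F x|)) :=
      ((tendsto_const_nhds.sub (hFx x)).abs)
    refine le_of_tendsto htend ?_
    filter_upwards [eventually_ge_atTop N] with l hl
    calc |f m x - f l x| ≤ normnn (f m - f l) * gahler x := key m l x
    _ ≤ ε * gahler x := mul_le_mul_of_nonneg_right (hN m l hm hl).le (gahler_nonneg x)
  refine ⟨F, ?_, ?_⟩
  · obtain ⟨N, hN⟩ := hest 1 one_pos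
    obtain ⟨K, hK, hKb⟩ := hbdd N
    refine ⟨K + 1, by positivity, fun x => ?_⟩
    calc |F x| ≤ |f N x| + |f N x - F x| := by
          have := abs_sub_abs_le_abs_sub (F x) (f N x)
          have h2 : |F x - f N x| = |f N x - F x| := abs_sub_comm _ _
          linarith [abs_add_le (f N x) (F x - f N x),
            (by ring : f N x + (F x - f N x) = F x)]
    _ ≤ K * gahler x + 1 * gahler x := add_le_add (hKb x) (hN N le_rfl x)
    _ = (K + 1) * gahler x := by ring
  · rw [Metric.tendsto_atTop]
    intro ε hε
    obtain ⟨N, hN⟩ := hest (ε / 2) (by linarith)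
    refine ⟨N, fun m hm => ?_⟩
    rw [Real.dist_eq, sub_zero, abs_of_nonneg (normnn_nonneg _)]
    have hle : normnn (f m - F) ≤ ε / 2 := by
      apply normnn_le (by linarith)
      intro x
      simpa using hN m hm x
    linarith
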